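/- Let Σ be a positive definite d×d matrix, let F be a symmetric d×d matrix satisfying F ⪰ κΣ for some κ > 0, and let v ∈ ℝ^d. Then ⟨Fv, Σ⁻¹ (Fv)⟩ ≥ κ² ⟨v, Σ v⟩; i.e., ‖Fv‖²_{Σ⁻¹} ≥ κ² ‖v‖²_Σ. -/

import Mathlib

open Matrix

theorem stmt_4 {d : ℕ} (Sig F : Matrix (Fin d) (Fin d) ℝ) (κ : ℝ) (hκ : 0 < κ)
    (hSig : Sig.PosDef) (hF : F.IsSymm) (hFSig : (F - κ • Sig).PosSemidef)
    (v : Fin d → ℝ) :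
    κ ^ 2 * (v ⬝ᵥ Sig.mulVec v) ≤ (F.mulVec v) ⬝ᵥ (Sig⁻¹.mulVec (F.mulVec v)) := by
  have hdet : IsUnit Sig.det := isUnit_iff_ne_zero.mpr hSig.det_pos.ne'
  have hSS : Sig⁻¹ * Sig = 1 := Matrix.nonsing_inv_mul Sig hdet
  have hSS' : Sig * Sig⁻¹ = 1 := Matrix.mul_nonsing_inv Sig hdet
  set G := F - κ • Sig with hGdef
  have hFv : F.mulVec v = G.mulVec v + κ • Sig.mulVec v := by
    simp [hGdef, Matrix.sub_mulVec, Matrix.smul_mulVec]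
  have h1 : 0 ≤ (G.mulVec v) ⬝ᵥ Sig⁻¹.mulVec (G.mulVec v) := by simpa using hSig.inv.posSemidef.dotProduct_mulVec_nonneg (G.mulVec v)
  have h2 : 0 ≤ v ⬝ᵥ G.mulVec v := by simpa using hFSig.dotProduct_mulVec_nonneg v
  have hSigSymm : Sigᵀ = Sig := hSig.isHermitian.eq
  have hcross1 : (G.mulVec v) ⬝ᵥ Sig⁻¹.mulVec (κ • Sig.mulVec v) = κ * (v ⬝ᵥ G.mulVec v) := by
    rw [Matrix.mulVec_smul, Matrix.mulVec_mulVec, hSS, Matrix.one_mulVec,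
      dotProduct_smul, dotProduct_comm, smul_eq_mul]
  have hcross2 : (κ • Sig.mulVec v) ⬝ᵥ Sig⁻¹.mulVec (G.mulVec v) = κ * (v ⬝ᵥ G.mulVec v) := by
    rw [smul_dotProduct, Matrix.mulVec_mulVec, Matrix.dotProduct_mulVec,
      ← Matrix.vecMul_transpose, hSigSymm, Matrix.vecMul_vecMul, ← Matrix.mul_assoc,
      hSS', Matrix.one_mul, ← Matrix.dotProduct_mulVec, smul_eq_mul]
  have hlast : (κ • Sig.mulVec v) ⬝ᵥ Sig⁻¹.mulVec (κ • Sig.mulVec v)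
      = κ ^ 2 * (v ⬝ᵥ Sig.mulVec v) := by
    rw [Matrix.mulVec_smul, Matrix.mulVec_mulVec, hSS, Matrix.one_mulVec,
      smul_dotProduct, dotProduct_smul, smul_eq_mul, smul_eq_mul,
      dotProduct_comm]
    ring
  rw [hFv, Matrix.mulVec_add, add_dotProduct, dotProduct_add,
    dotProduct_add, hcross1, hcross2, hlast]
  nlinarith [h1, h2, hκ]
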